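/- There exists a constant c > 0 such that for every j ≥ 1 and every r with 0 < r ≤ c/√j, there is a continuous map f : (S¹)^j → (ℝ²)^{2j} with the following properties for every θ = (θ₁,…,θ_j) ∈ (S¹)^j: writing f(θ) = (x₁,…,x_{2j}), (a) ‖x_k‖ ≤ 1 − r for all k; (b) ‖x_k − x_l‖ ≥ 2r for all k ≠ l; and (c) x_{2i} − x_{2i−1} = 2r·θᵢ for each i = 1,…,j (so the direction from the (2i−1)st disk to the 2i-th disk is θᵢ). In other words, for r ≲ 1/√j, j disjoint pairs of disks of radius r can spin independently inside the unit disk, each pair turning inside its own medium-sized disk. -/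

import Mathlib

open Real

noncomputable def diskP (r : ℝ) (m : ℕ) (i : ℕ) : EuclideanSpace ℝ (Fin 2) :=
  WithLp.toLp 2 ![4*r*((i % m : ℕ) : ℝ), 4*r*((i / m : ℕ) : ℝ)]

lemma diskP_norm_le (r : ℝ) (hr : 0 ≤ r) (m i : ℕ) (hm : 1 ≤ m) (hi : i < m * m) :
    ‖diskP r m i‖ ≤ 8 * r * ((m - 1 : ℕ) : ℝ) := by
  have ha : i % m ≤ m - 1 := by have := Nat.mod_lt i (by omega : 0 < m); omega
  have hb : i / m ≤ m - 1 := by have : i / m < m := Nat.div_lt_of_lt_mul hi; omega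
  have ha' : ((i % m : ℕ) : ℝ) ≤ ((m - 1 : ℕ) : ℝ) := by exact_mod_cast ha
  have hb' : ((i / m : ℕ) : ℝ) ≤ ((m - 1 : ℕ) : ℝ) := by exact_mod_cast hb
  have h0 : (0:ℝ) ≤ ((m - 1 : ℕ) : ℝ) := by positivity
  rw [EuclideanSpace.norm_eq]
  simp only [diskP, Fin.sum_univ_two, Matrix.cons_val_zero, Matrix.cons_val_one, Matrix.head_cons,
    Real.norm_eq_abs, sq_abs]
  have h : (4*r*((i % m : ℕ):ℝ))^2 + (4*r*((i / m : ℕ):ℝ))^2 ≤ (8 * r * ((m-1:ℕ):ℝ))^2 := by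
    nlinarith [sq_nonneg r, mul_le_mul ha' ha' (by positivity : (0:ℝ) ≤ ((i % m : ℕ):ℝ)) h0,
      mul_le_mul hb' hb' (by positivity : (0:ℝ) ≤ ((i / m : ℕ):ℝ)) h0]
  refine le_trans (Real.sqrt_le_sqrt h) ?_
  rw [Real.sqrt_sq (by positivity)]

lemma diskP_sep (r : ℝ) (hr : 0 ≤ r) (m i i' : ℕ) (hm : 1 ≤ m) (hii : i ≠ i')
    (hi : i < m * m) (hi' : i' < m * m) : 4 * r ≤ ‖diskP r m i - diskP r m i'‖ := by
  have key : ∀ a a' : ℕ, a ≠ a' → 4 * r ≤ |4*r*(a:ℝ) - 4*r*(a':ℝ)| := by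
    intro a a' h
    have h1 : (1:ℝ) ≤ |(a:ℝ) - (a':ℝ)| := by
      have h2 : (1:ℤ) ≤ |(a:ℤ) - (a':ℤ)| := Int.one_le_abs (by omega)
      exact_mod_cast h2
    calc 4 * r = 4 * r * 1 := by ring
      _ ≤ 4 * r * |(a:ℝ) - (a':ℝ)| := by nlinarith
      _ = |4*r| * |(a:ℝ) - (a':ℝ)| := by rw [abs_of_nonneg (by linarith : (0:ℝ) ≤ 4*r)]
      _ = |4*r*(a:ℝ) - 4*r*(a':ℝ)| := by rw [← abs_mul]; ring_nf
  have hcoord : ∀ t : Fin 2, |(diskP r m i - diskP r m i') t| ≤ ‖diskP r m i - diskP r m i'‖ := by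
    intro t
    rw [EuclideanSpace.norm_eq, ← Real.sqrt_sq_eq_abs]
    apply Real.sqrt_le_sqrt
    rw [Fin.sum_univ_two]
    fin_cases t <;> simp [sq_abs] <;>
      nlinarith [sq_nonneg ((diskP r m i - diskP r m i') 0), sq_nonneg ((diskP r m i - diskP r m i') 1)]
  have hne : i % m ≠ i' % m ∨ i / m ≠ i' / m := by
    by_contra h
    push_neg at h
    exact hii (by rw [← Nat.div_add_mod i m, ← Nat.div_add_mod i' m, h.1, h.2])
  rcases hne with h | h
  · calc 4*r ≤ |4*r*((i % m:ℕ):ℝ) - 4*r*((i' % m:ℕ):ℝ)| := key _ _ h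
      _ = |(diskP r m i - diskP r m i') 0| := by simp [diskP]
      _ ≤ _ := hcoord 0
  · calc 4*r ≤ |4*r*((i / m:ℕ):ℝ) - 4*r*((i' / m:ℕ):ℝ)| := key _ _ h
      _ = |(diskP r m i - diskP r m i') 1| := by simp [diskP]
      _ ≤ _ := hcoord 1

/-- For some c > 0 and all j, for any radius r ≤ c/√j, j pairs of disks of radius r can
spin independently inside the closed unit disk: there is a continuous choice of the 2j
centers as a function of the j angles such that the disks form a valid configuration and
the direction from the (2i−1)st to the 2i-th disk is the i-th angle. -/
theorem disk_pairs_spin_independently :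
    ∃ c : ℝ, 0 < c ∧ ∀ j : ℕ, 1 ≤ j → ∀ r : ℝ, 0 < r → r ≤ c / Real.sqrt j →
      ∃ f : (Fin j → Metric.sphere (0 : EuclideanSpace ℝ (Fin 2)) 1) →
            (Fin (2 * j) → EuclideanSpace ℝ (Fin 2)),
        Continuous f ∧
        ∀ θ : Fin j → Metric.sphere (0 : EuclideanSpace ℝ (Fin 2)) 1,
          (∀ k : Fin (2 * j), ‖f θ k‖ ≤ 1 - r) ∧
          (∀ k l : Fin (2 * j), k ≠ l → 2 * r ≤ ‖f θ k - f θ l‖) ∧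
          (∀ i : Fin j,
            f θ ⟨2 * i.val + 1, by have := i.isLt; omega⟩ -
              f θ ⟨2 * i.val, by have := i.isLt; omega⟩ =
            (2 * r) • (θ i : EuclideanSpace ℝ (Fin 2))) := by
  refine ⟨1/16, by norm_num, ?_⟩
  intro j hj r hr hrle
  have hsj : (1:ℝ) ≤ Real.sqrt j := by
    rw [show (1:ℝ) = Real.sqrt 1 by simp]
    exact Real.sqrt_le_sqrt (by exact_mod_cast hj)
  have hsj0 : (0:ℝ) < Real.sqrt j := lt_of_lt_of_le one_pos hsj
  have hrsj : r * Real.sqrt j ≤ 1/16 := by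
    rw [le_div_iff₀ hsj0] at hrle
    linarith
  have hr16 : r ≤ 1/16 := by nlinarith
  set m : ℕ := Nat.sqrt (j-1) + 1 with hmdef
  have hm1 : 1 ≤ m := by omega
  have hjm : j ≤ m * m := by
    have h := Nat.lt_succ_sqrt (j-1)
    calc j = (j-1)+1 := by omega
      _ ≤ m*m := h
  have hmsq : ((m - 1 : ℕ) : ℝ) ≤ Real.sqrt j := by
    have h1 : (m-1)^2 ≤ j := by
      have h2 := Nat.sqrt_le' (j-1)
      have h3 : m - 1 = Nat.sqrt (j-1) := by omega
      rw [h3]; omega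
    rcases Nat.eq_zero_or_pos (m-1) with h | h
    · rw [h]; simpa using Real.sqrt_nonneg (j:ℝ)
    · rw [Real.le_sqrt' (by exact_mod_cast h)]
      exact_mod_cast h1
  have hPnorm : ∀ i : ℕ, i < m*m → ‖diskP r m i‖ ≤ 1/2 := by
    intro i hi
    refine le_trans (diskP_norm_le r hr.le m i hm1 hi) ?_
    have h4 : 8 * r * ((m-1:ℕ):ℝ) ≤ 8 * r * Real.sqrt j :=
      mul_le_mul_of_nonneg_left hmsq (by positivity)
    linarith
  refine ⟨fun θ k => diskP r m (k.val / 2) +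
      (if k.val % 2 = 0 then -r else r) •
        (θ ⟨k.val / 2, by have := k.isLt; omega⟩ : EuclideanSpace ℝ (Fin 2)), ?_, ?_⟩
  · apply continuous_pi
    intro k
    exact continuous_const.add ((continuous_const_smul _).comp (continuous_subtype_val.comp (continuous_apply _)))
  intro θ
  have hθ : ∀ i : Fin j, ‖(θ i : EuclideanSpace ℝ (Fin 2))‖ = 1 :=
    fun i => mem_sphere_zero_iff_norm.mp (θ i).2
  have habs : ∀ k : Fin (2*j), |if k.val % 2 = 0 then -r else r| = r := by
    intro k
    split_ifs <;> simp [abs_of_nonneg hr.le]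
  refine ⟨?_, ?_, ?_⟩
  · -- (a) norm bound
    intro k
    have hidx : k.val / 2 < m*m := lt_of_lt_of_le (by have := k.isLt; omega) hjm
    calc ‖diskP r m (k.val / 2) + (if k.val % 2 = 0 then -r else r) •
          (θ ⟨k.val / 2, by have := k.isLt; omega⟩ : EuclideanSpace ℝ (Fin 2))‖
        ≤ ‖diskP r m (k.val / 2)‖ + ‖(if k.val % 2 = 0 then -r else r) •
          (θ ⟨k.val / 2, by have := k.isLt; omega⟩ : EuclideanSpace ℝ (Fin 2))‖ := norm_add_le _ _
      _ ≤ 1/2 + r := by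
          rw [norm_smul, hθ, Real.norm_eq_abs, habs k, mul_one]
          linarith [hPnorm _ hidx]
      _ ≤ 1 - r := by linarith
  · -- (b) separation
    intro k l hkl
    beta_reduce
    by_cases h : k.val / 2 = l.val / 2
    · -- same pair
      have hpar : k.val % 2 ≠ l.val % 2 := by
        intro hp
        exact hkl (Fin.ext (by omega))
      have e : (⟨k.val / 2, (by have := k.isLt; omega : k.val / 2 < j)⟩ : Fin j)
          = ⟨l.val / 2, (by have := l.isLt; omega : l.val / 2 < j)⟩ := Fin.ext h
      rw [e, show diskP r m (k.val/2) = diskP r m (l.val/2) from by rw [h]]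
      rw [add_sub_add_left_eq_sub, ← sub_smul, norm_smul, hθ, Real.norm_eq_abs, mul_one]
      have hd : |(if k.val % 2 = 0 then -r else r) - (if l.val % 2 = 0 then -r else r)| = 2*r := by
        rcases Nat.mod_two_eq_zero_or_one k.val with hk2 | hk2 <;>
          rcases Nat.mod_two_eq_zero_or_one l.val with hl2 | hl2
        · exact absurd (hk2.trans hl2.symm) hpar
        · rw [if_pos hk2, if_neg (by omega), show -r - r = -(2*r) by ring, abs_neg,
            abs_of_nonneg (by linarith)]
        · rw [if_neg (by omega), if_pos hl2, show r - -r = 2*r by ring,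
            abs_of_nonneg (by linarith)]
        · exact absurd (hk2.trans hl2.symm) hpar
      rw [hd]
    · -- different pairs
      have hsep := diskP_sep r hr.le m (k.val/2) (l.val/2) hm1 h
        (lt_of_lt_of_le (by have := k.isLt; omega) hjm)
        (lt_of_lt_of_le (by have := l.isLt; omega) hjm)
      set P := diskP r m (k.val / 2)
      set P' := diskP r m (l.val / 2)
      set a := (if k.val % 2 = 0 then -r else r) •
        (θ ⟨k.val / 2, by have := k.isLt; omega⟩ : EuclideanSpace ℝ (Fin 2)) with ha
      set b := (if l.val % 2 = 0 then -r else r) •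
        (θ ⟨l.val / 2, by have := l.isLt; omega⟩ : EuclideanSpace ℝ (Fin 2)) with hb
      have hna : ‖a‖ = r := by rw [ha, norm_smul, hθ, Real.norm_eq_abs, habs k, mul_one]
      have hnb : ‖b‖ = r := by rw [hb, norm_smul, hθ, Real.norm_eq_abs, habs l, mul_one]
      have h3 : ‖P - P'‖ ≤ ‖(P+a)-(P'+b)‖ + ‖a‖ + ‖b‖ := by
        have h2 : P - P' = ((P+a)-(P'+b)) - a + b := by abel
        calc ‖P - P'‖ = ‖((P+a)-(P'+b)) - a + b‖ := by rw [h2]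
          _ ≤ ‖((P+a)-(P'+b)) - a‖ + ‖b‖ := norm_add_le _ _
          _ ≤ ‖(P+a)-(P'+b)‖ + ‖a‖ + ‖b‖ := by
              linarith [norm_sub_le ((P+a)-(P'+b)) a]
      rw [hna, hnb] at h3
      linarith
  · -- (c) direction condition
    intro i
    beta_reduce
    simp only [Fin.val_mk,
      show (2*i.val+1)/2 = i.val from by omega,
      show (2*i.val+1)%2 = 1 from by omega,
      show 2*i.val/2 = i.val from by omega,
      show (2*i.val)%2 = 0 from by omega,
      Fin.eta, if_true, one_ne_zero, if_false]
    module
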